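/- For the hypercube graph Q_n with n ≥ 3, the failed zero forcing number satisfies F(Q_n) ≥ 2^n − n. -/

import Mathlib

open SimpleGraph

variable {V : Type*}

/-- One step of the standard zero forcing color-change rule: a blue vertex `u`
whose unique white neighbor is `v` forces `v` to become blue. -/
def zfStep (G : SimpleGraph V) (B : Set V) : Set V :=
  B ∪ {v | v ∉ B ∧ ∃ u ∈ B, G.Adj u v ∧ ∀ w, G.Adj u w → w ∉ B → w = v}

/-- `S` is a zero forcing set: iterating the standard color-change rule from `S`
eventually colors every vertex blue. -/
def IsZeroForcingSet (G : SimpleGraph V) (S : Set V) : Prop :=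
  (⋃ n, (zfStep G)^[n] S) = Set.univ

/-- The failed zero forcing number `F(G)`: the maximum cardinality of a set that
is not a zero forcing set. -/
noncomputable def failedZF (G : SimpleGraph V) : ℕ :=
  sSup {n | ∃ S : Set V, ¬ IsZeroForcingSet G S ∧ S.ncard = n}

/-- The zero forcing number `Z(G)`. -/
noncomputable def zfNumber (G : SimpleGraph V) : ℕ :=
  sInf {n | ∃ S : Set V, IsZeroForcingSet G S ∧ S.ncard = n}

/-- One step of the positive semidefinite color-change rule. -/
def psdStep (G : SimpleGraph V) (B : Set V) : Set V :=
  B ∪ {v | ∃ (hv : v ∉ B), ∃ u ∈ B, G.Adj u v ∧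
        ∀ (w : V) (hw : w ∉ B), G.Adj u w →
          (G.induce {x | x ∉ B}).Reachable ⟨w, hw⟩ ⟨v, hv⟩ → w = v}

/-- `S` is a positive semidefinite zero forcing set. -/
def IsPSDZeroForcingSet (G : SimpleGraph V) (S : Set V) : Prop :=
  (⋃ n, (psdStep G)^[n] S) = Set.univ

/-- The failed positive semidefinite zero forcing number `F₊(G)`. -/
noncomputable def failedPSD (G : SimpleGraph V) : ℕ :=
  sSup {n | ∃ S : Set V, ¬ IsPSDZeroForcingSet G S ∧ S.ncard = n}

/-- The positive semidefinite zero forcing number `Z₊(G)`. -/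
noncomputable def psdZFNumber (G : SimpleGraph V) : ℕ :=
  sInf {n | ∃ S : Set V, IsPSDZeroForcingSet G S ∧ S.ncard = n}

/-- The hypercube `Qₙ`: vertices are binary `n`-tuples, adjacent iff they differ
in exactly one coordinate. -/
def hypercube (n : ℕ) : SimpleGraph (Fin n → Bool) where
  Adj x y := (Finset.univ.filter fun i => x i ≠ y i).card = 1
  symm := by
    constructor
    intro x y h
    rw [← h]
    congr 1
    ext i
    simp [ne_comm]
  loopless := by
    constructor
    intro x h
    simp at h

namespace FZFAux
variable {n : ℕ}

def eB (i : Fin n) : Fin n → Bool := fun k => decide (k = i)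

def wt (x : Fin n → Bool) : ℕ := (Finset.univ.filter fun i => x i = true).card

lemma wt_eB (i : Fin n) : wt (eB i) = 1 := by
  have : (Finset.univ.filter fun k => eB i k = true) = {i} := by
    ext k; simp [eB]
  rw [wt, this, Finset.card_singleton]

lemma adj_iff {x y : Fin n → Bool} : (hypercube n).Adj x y ↔
    ∃ j, x j ≠ y j ∧ ∀ k, k ≠ j → x k = y k := by
  constructor
  · intro h
    obtain ⟨j, hj⟩ := Finset.card_eq_one.mp h
    refine ⟨j, ?_, ?_⟩
    · have : j ∈ Finset.univ.filter fun i => x i ≠ y i := hj ▸ Finset.mem_singleton_self j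
      simpa using this
    · intro k hk
      by_contra hc
      have : k ∈ Finset.univ.filter fun i => x i ≠ y i := by simpa using hc
      rw [hj] at this
      simp at this
      exact hk this
  · rintro ⟨j, hj, hk⟩
    show (Finset.univ.filter fun i => x i ≠ y i).card = 1
    rw [Finset.card_eq_one]
    refine ⟨j, ?_⟩
    ext k
    by_cases h : k = j
    · subst h; simp [hj]
    · simp [h, hk k h]

lemma eq_eB_of_wt {v : Fin n → Bool} (h : wt v = 1) : ∃ i, v = eB i := by
  obtain ⟨i, hi⟩ := Finset.card_eq_one.mp h
  have hmem : ∀ k, v k = true ↔ k = i := by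
    intro k
    constructor
    · intro hk
      have : k ∈ ({i} : Finset (Fin n)) := hi ▸ (by simpa using hk)
      simpa using this
    · intro hk
      rw [hk]
      have : i ∈ Finset.univ.filter fun j => v j = true := hi ▸ Finset.mem_singleton_self i
      simpa using this
  refine ⟨i, funext fun k => ?_⟩
  by_cases h : k = i
  · rw [show eB i k = true by simp [eB, h]]
    exact (hmem k).mpr h
  · simp only [eB, decide_eq_false h]
    cases hvk : v k
    · rfl
    · exact absurd ((hmem k).mp hvk) h

lemma no_force (hn : 3 ≤ n) {u v : Fin n → Bool} (hv : wt v = 1)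
    (hadj : (hypercube n).Adj u v) :
    ∃ w, (hypercube n).Adj u w ∧ wt w = 1 ∧ w ≠ v := by
  obtain ⟨i, rfl⟩ := eq_eB_of_wt hv
  obtain ⟨j, hj, hjk⟩ := adj_iff.mp hadj
  by_cases hij : j = i
  · -- u is the all-false vector
    have hu0 : ∀ k, u k = false := by
      intro k
      by_cases h : k = j
      · have he : eB i j = true := by simp [eB, hij]
        rw [he] at hj
        rw [h]
        simpa using hj
      · rw [hjk k h]
        have hki : ¬ k = i := fun hki => h (hki.trans hij.symm)
        simp [eB, hki]
    have hcard : 1 < Fintype.card (Fin n) := by simp; omega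
    obtain ⟨m, hm⟩ := Fintype.exists_ne_of_one_lt_card hcard i
    refine ⟨eB m, ?_, wt_eB m, ?_⟩
    · rw [adj_iff]
      refine ⟨m, ?_, ?_⟩
      · simp [hu0 m, eB]
      · intro k hk
        simp [hu0 k, eB, hk]
    · intro hcon
      have := congrFun hcon i
      simp [eB, hm.symm] at this
  · -- u is the pair i j
    have hui : u i = true := by
      rw [hjk i (fun h => hij h.symm)]; simp [eB]
    have huj : u j = true := by
      have : eB i j = false := by simp [eB, hij]
      rw [this] at hj
      simpa using hj
    have huk : ∀ k, k ≠ i → k ≠ j → u k = false := by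
      intro k hki hkj
      rw [hjk k hkj]
      simp [eB, hki]
    refine ⟨eB j, ?_, wt_eB j, ?_⟩
    · rw [adj_iff]
      refine ⟨i, ?_, ?_⟩
      · simp [hui, eB, Ne.symm hij]
      · intro k hk
        by_cases h : k = j
        · subst h; simp [huj, eB]
        · simp [huk k hk h, eB, h]
    · intro hcon
      have := congrFun hcon j
      simp [eB, hij] at this

lemma eB_injective : Function.Injective (eB (n := n)) := by
  intro a b h
  have := congrFun h a
  simpa [eB, eq_comm] using this

end FZFAux


/-- For `n ≥ 3`, `F(Qₙ) ≥ 2ⁿ − n`. -/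
theorem failedZF_hypercube (n : ℕ) (hn : 3 ≤ n) :
    2 ^ n - n ≤ failedZF (hypercube n) := by
  open FZFAux in
  classical
  set B : Set (Fin n → Bool) := {x | ¬ wt x = 1} with hB
  have hfix : zfStep (hypercube n) B = B := by
    rw [zfStep, Set.union_eq_left]
    rintro v ⟨hv, u, hu, hadj, huniq⟩
    exfalso
    have hv1 : wt v = 1 := not_not.mp hv
    obtain ⟨w, hw1, hw2, hw3⟩ := no_force hn hv1 hadj
    exact hw3 (huniq w hw1 (by simpa [hB] using hw2))
  have hpos : 0 < n := by omega
  have hnotZF : ¬ IsZeroForcingSet (hypercube n) B := by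
    rw [IsZeroForcingSet]
    have : ∀ m, (zfStep (hypercube n))^[m] B = B := fun m =>
      Function.iterate_fixed hfix m
    simp only [this, Set.iUnion_const]
    intro hc
    have : eB ⟨0, hpos⟩ ∈ B := hc ▸ Set.mem_univ _
    rw [hB] at this
    exact this (wt_eB _)
  have hWrange : {x : Fin n → Bool | wt x = 1} = Set.range eB := by
    ext x
    constructor
    · intro hx
      obtain ⟨i, rfl⟩ := eq_eB_of_wt hx
      exact ⟨i, rfl⟩
    · rintro ⟨i, rfl⟩
      exact wt_eB i
  have hWcard : ({x : Fin n → Bool | wt x = 1}).ncard = n := by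
    rw [hWrange, Set.ncard_eq_toFinset_card', Set.toFinset_range]
    rw [Finset.card_image_of_injective _ eB_injective]
    simp
  have hBc : B = {x : Fin n → Bool | wt x = 1}ᶜ := by
    ext x; simp [hB]
  have hcard : B.ncard = 2 ^ n - n := by
    have h1 := Set.ncard_add_ncard_compl {x : Fin n → Bool | wt x = 1}
    rw [hWcard] at h1
    have h2 : Nat.card (Fin n → Bool) = 2 ^ n := by simp
    rw [h2] at h1
    rw [hBc]
    omega
  have hmem : 2 ^ n - n ∈ {m | ∃ S : Set (Fin n → Bool), ¬ IsZeroForcingSet (hypercube n) S ∧ S.ncard = m} :=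
    ⟨B, hnotZF, hcard⟩
  refine le_csSup ⟨2 ^ n, ?_⟩ hmem
  rintro m ⟨S, _, rfl⟩
  calc S.ncard ≤ (Set.univ : Set (Fin n → Bool)).ncard :=
        Set.ncard_le_ncard (Set.subset_univ S) Set.finite_univ
    _ = 2 ^ n := by rw [Set.ncard_univ]; simp
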